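/- Let 0 ≤ ν < 1, κ ≥ 0 and R̃ ≥ 0. Let (r_k^{(l)})_{k≥1, l≥0} be nonnegative reals with r_k^{(0)} ≤ R̃ for all k ≥ 1, satisfying for all k ≥ 1 and l ≥ 1: r_k^{(l)} ≤ κ Σ_{r=0}^{k−1} ν^r r_{k−r}^{(l−1)} + 2√2 ν^k R̃. Then for every l ≥ 1 and every k ≥ 1: r_k^{(l)} ≤ [ (κ/(1−ν))^l + 2√2 ν^k Σ_{s=0}^{l−1} (κ k)^s ] R̃. -/

import Mathlib

/-- The linear recursion for the radii in the convergence-to-the-global-maximizer proof: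
if `r_k^{(0)} ≤ R̃` and `r_k^{(l)} ≤ κ Σ_{j<k} ν^j r_{k−j}^{(l−1)} + 2√2 ν^k R̃`, then
`r_k^{(l)} ≤ [(κ/(1−ν))^l + 2√2 ν^k Σ_{s<l} (κk)^s] R̃` for all `l ≥ 1`, `k ≥ 1`. -/
theorem stmt6 (ν κ R : ℝ) (hν0 : 0 ≤ ν) (hν1 : ν < 1) (hκ : 0 ≤ κ) (hR : 0 ≤ R)
    (rr : ℕ → ℕ → ℝ) (hrr : ∀ k l, 0 ≤ rr k l)
    (h0 : ∀ k, 1 ≤ k → rr k 0 ≤ R)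
    (hrec : ∀ k, 1 ≤ k → ∀ l, 1 ≤ l →
      rr k l ≤ κ * (∑ j ∈ Finset.range k, ν ^ j * rr (k - j) (l - 1)) +
        2 * Real.sqrt 2 * ν ^ k * R) :
    ∀ l, 1 ≤ l → ∀ k, 1 ≤ k →
      rr k l ≤ ((κ / (1 - ν)) ^ l +
        2 * Real.sqrt 2 * ν ^ k * ∑ s ∈ Finset.range l, (κ * k) ^ s) * R := by
  have h1ν : 0 < 1 - ν := by linarith
  have hc : (0:ℝ) ≤ 2 * Real.sqrt 2 := by positivity
  have hνk : ∀ k : ℕ, (0:ℝ) ≤ ν ^ k := fun k => pow_nonneg hν0 k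
  have hgeom : ∀ k : ℕ, ∑ j ∈ Finset.range k, ν ^ j ≤ 1 / (1 - ν) := by
    intro k
    rw [geom_sum_eq (ne_of_lt hν1) k]
    have e : (ν ^ k - 1) / (ν - 1) = (1 - ν ^ k) / (1 - ν) := by
      rw [← neg_div_neg_eq]; ring_nf
    rw [e]
    gcongr
    nlinarith [hνk k]
  intro l hl
  induction l, hl using Nat.le_induction with
  | base =>
    intro k hk
    have h := hrec k hk 1 le_rfl
    have hbound : ∑ j ∈ Finset.range k, ν ^ j * rr (k - j) 0 ≤ (1 / (1 - ν)) * R := by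
      calc ∑ j ∈ Finset.range k, ν ^ j * rr (k - j) 0
          ≤ ∑ j ∈ Finset.range k, ν ^ j * R := by
            refine Finset.sum_le_sum fun j hj => ?_
            have hj' : j < k := Finset.mem_range.mp hj
            exact mul_le_mul_of_nonneg_left (h0 _ (by omega)) (hνk j)
        _ = (∑ j ∈ Finset.range k, ν ^ j) * R := by rw [← Finset.sum_mul]
        _ ≤ (1 / (1 - ν)) * R := mul_le_mul_of_nonneg_right (hgeom k) hR
    calc rr k 1 ≤ κ * (∑ j ∈ Finset.range k, ν ^ j * rr (k - j) 0) +
          2 * Real.sqrt 2 * ν ^ k * R := by simpa using h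
      _ ≤ κ * ((1 / (1 - ν)) * R) + 2 * Real.sqrt 2 * ν ^ k * R :=
          add_le_add_left (mul_le_mul_of_nonneg_left hbound hκ) _
      _ = ((κ / (1 - ν)) ^ 1 +
          2 * Real.sqrt 2 * ν ^ k * ∑ s ∈ Finset.range 1, (κ * k) ^ s) * R := by
          simp; ring
  | succ l hl ih =>
    intro k hk
    have h := hrec k hk (l + 1) (by omega)
    simp only [Nat.add_sub_cancel] at h
    have key : ∑ j ∈ Finset.range k, ν ^ j * rr (k - j) l ≤
        ∑ j ∈ Finset.range k,
          (ν ^ j * ((κ / (1 - ν)) ^ l) * R +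
            2 * Real.sqrt 2 * ν ^ k * (∑ s ∈ Finset.range l, (κ * k) ^ s) * R) := by
      refine Finset.sum_le_sum fun j hj => ?_
      have hj' : j < k := Finset.mem_range.mp hj
      have h1 : rr (k - j) l ≤ ((κ / (1 - ν)) ^ l +
          2 * Real.sqrt 2 * ν ^ (k - j) * ∑ s ∈ Finset.range l, (κ * (k - j : ℕ)) ^ s) * R :=
        ih (k - j) (by omega)
      have hνjk : ν ^ j * ν ^ (k - j) = ν ^ k := by
        rw [← pow_add]; congr 1; omega
      have hS : (∑ s ∈ Finset.range l, (κ * (k - j : ℕ)) ^ s) ≤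
          ∑ s ∈ Finset.range l, (κ * k) ^ s := by
        refine Finset.sum_le_sum fun s _ => ?_
        refine pow_le_pow_left₀ (by positivity) ?_ s
        exact mul_le_mul_of_nonneg_left (Nat.cast_le.mpr (Nat.sub_le k j)) hκ
      have hSnn : (0:ℝ) ≤ ∑ s ∈ Finset.range l, (κ * (k - j : ℕ)) ^ s :=
        Finset.sum_nonneg fun s _ => by positivity
      calc ν ^ j * rr (k - j) l
          ≤ ν ^ j * (((κ / (1 - ν)) ^ l +
              2 * Real.sqrt 2 * ν ^ (k - j) * ∑ s ∈ Finset.range l, (κ * (k - j : ℕ)) ^ s) * R) :=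
            mul_le_mul_of_nonneg_left h1 (hνk j)
        _ = ν ^ j * ((κ / (1 - ν)) ^ l) * R +
            2 * Real.sqrt 2 * ν ^ k * (∑ s ∈ Finset.range l, (κ * (k - j : ℕ)) ^ s) * R := by
            rw [← hνjk]; ring
        _ ≤ ν ^ j * ((κ / (1 - ν)) ^ l) * R +
            2 * Real.sqrt 2 * ν ^ k * (∑ s ∈ Finset.range l, (κ * k) ^ s) * R := by
            gcongr
    have key2 : ∑ j ∈ Finset.range k,
          (ν ^ j * ((κ / (1 - ν)) ^ l) * R +
            2 * Real.sqrt 2 * ν ^ k * (∑ s ∈ Finset.range l, (κ * k) ^ s) * R) ≤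
        (1 / (1 - ν)) * ((κ / (1 - ν)) ^ l) * R +
          (k : ℝ) * (2 * Real.sqrt 2 * ν ^ k * (∑ s ∈ Finset.range l, (κ * k) ^ s) * R) := by
      rw [Finset.sum_add_distrib, Finset.sum_const, Finset.card_range, nsmul_eq_mul]
      refine add_le_add_left ?_ _
      calc ∑ j ∈ Finset.range k, ν ^ j * ((κ / (1 - ν)) ^ l) * R
          = (∑ j ∈ Finset.range k, ν ^ j) * ((κ / (1 - ν)) ^ l) * R := by
            rw [← Finset.sum_mul, ← Finset.sum_mul]
        _ ≤ (1 / (1 - ν)) * ((κ / (1 - ν)) ^ l) * R := by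
            have : (0:ℝ) ≤ (κ / (1 - ν)) ^ l := by positivity
            have := mul_le_mul_of_nonneg_right
              (mul_le_mul_of_nonneg_right (hgeom k) this) hR
            linarith
    have hSsucc : (∑ s ∈ Finset.range (l + 1), (κ * k) ^ s)
        = (κ * k) * (∑ s ∈ Finset.range l, (κ * k) ^ s) + 1 := by
      rw [geom_sum_succ]
    calc rr k (l + 1)
        ≤ κ * (∑ j ∈ Finset.range k, ν ^ j * rr (k - j) l) + 2 * Real.sqrt 2 * ν ^ k * R := h
      _ ≤ κ * ((1 / (1 - ν)) * ((κ / (1 - ν)) ^ l) * R +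
            (k : ℝ) * (2 * Real.sqrt 2 * ν ^ k * (∑ s ∈ Finset.range l, (κ * k) ^ s) * R)) +
          2 * Real.sqrt 2 * ν ^ k * R := by
          refine add_le_add_left (mul_le_mul_of_nonneg_left (key.trans key2) hκ) _
      _ = ((κ / (1 - ν)) ^ (l + 1) +
          2 * Real.sqrt 2 * ν ^ k * ∑ s ∈ Finset.range (l + 1), (κ * k) ^ s) * R := by
          rw [hSsucc]
          have hne : (1 - ν) ≠ 0 := ne_of_gt h1ν
          field_simp
          linear_combination (-(R * κ * κ ^ l * (1 - ν)⁻¹ ^ l)) * mul_inv_cancel₀ hne
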